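/- Let φ : [-1,1] → ℝ be differentiable with |φ'(x)| ≤ (C/ε²)(e^{-M(1+x)/ε} + e^{-M(1-x)/ε}) for constants C, M, ε > 0 with φ'(0) defined, and let 0 < κ < 1. Then for all x, y ∈ [-1+ε^κ, 1-ε^κ], |φ(x) - φ(y)| ≤ (4C/(Mε)) e^{-M ε^{κ-1}}. In particular sup_{x,y ∈ [-1+ε^κ, 1-ε^κ]} |φ(x) - φ(y)| → 0 as ε → 0. -/

import Mathlib

lemma aux_mono (f d : ℝ → ℝ) (a b : ℝ) (hf : ∀ x ∈ Set.Icc a b, HasDerivAt f (d x) x)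
    (hd : ∀ x ∈ Set.Icc a b, 0 ≤ d x) : MonotoneOn f (Set.Icc a b) := by
  apply monotoneOn_of_deriv_nonneg (convex_Icc a b)
  · exact fun x hx => (hf x hx).continuousAt.continuousWithinAt
  · intro x hx
    rw [interior_Icc] at hx
    exact ((hf x (Set.mem_Icc_of_Ioo hx)).differentiableAt).differentiableWithinAt
  · intro x hx
    rw [interior_Icc] at hx
    rw [(hf x (Set.mem_Icc_of_Ioo hx)).deriv]
    exact hd x (Set.mem_Icc_of_Ioo hx)

lemma aux_G_deriv (C M ε : ℝ) (hM : M ≠ 0) (hε : ε ≠ 0) (t : ℝ) :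
    HasDerivAt (fun t => C/(M*ε) * (Real.exp (-M*(1-t)/ε) - Real.exp (-M*(1+t)/ε)))
      (C / ε^2 * (Real.exp (-M*(1+t)/ε) + Real.exp (-M*(1-t)/ε))) t := by
  have h1 : HasDerivAt (fun t:ℝ => -M*(1-t)/ε) (M/ε) t := by
    have := (((hasDerivAt_const t (1:ℝ)).sub (hasDerivAt_id t)).const_mul (-M)).div_const ε
    simpa using this
  have h2 : HasDerivAt (fun t:ℝ => -M*(1+t)/ε) (-M/ε) t := by
    have := (((hasDerivAt_const t (1:ℝ)).add (hasDerivAt_id t)).const_mul (-M)).div_const ε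
    simpa using this
  have := ((h1.exp.sub h2.exp).const_mul (C/(M*ε)))
  refine this.congr_deriv ?_
  field_simp
  ring

/-- Interior flatness: from the exponential gradient bound we get an oscillation
bound on [-1+ε^κ, 1-ε^κ] that tends to 0 as ε → 0. -/
theorem stmt_17 (C M κ : ℝ) (hC : 0 < C) (hM : 0 < M) (hκ₀ : 0 < κ) (hκ₁ : κ < 1)
    (φ : ℝ → ℝ → ℝ)
    (hdiff : ∀ ε : ℝ, ε ∈ Set.Ioo (0 : ℝ) 1 →
      ∀ x ∈ Set.Icc (-1 : ℝ) 1, HasDerivWithinAt (φ ε) (deriv (φ ε) x) (Set.Icc (-1 : ℝ) 1) x)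
    (hbound : ∀ ε : ℝ, ε ∈ Set.Ioo (0 : ℝ) 1 → ∀ x ∈ Set.Icc (-1 : ℝ) 1,
      |deriv (φ ε) x| ≤ C / ε ^ 2 *
        (Real.exp (-M * (1 + x) / ε) + Real.exp (-M * (1 - x) / ε))) :
    (∀ ε : ℝ, ε ∈ Set.Ioo (0 : ℝ) 1 →
      ∀ x ∈ Set.Icc (-1 + ε ^ κ) (1 - ε ^ κ), ∀ y ∈ Set.Icc (-1 + ε ^ κ) (1 - ε ^ κ),
        |φ ε x - φ ε y| ≤ 4 * C / (M * ε) * Real.exp (-M * ε ^ (κ - 1))) ∧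
    Filter.Tendsto (fun ε : ℝ => 4 * C / (M * ε) * Real.exp (-M * ε ^ (κ - 1)))
      (nhdsWithin 0 (Set.Ioi 0)) (nhds 0) := by
  constructor
  · intro ε hε x hx y hy
    obtain ⟨hε0, hε1⟩ := hε
    set δ := ε ^ κ with hδdef
    have hδpos : 0 < δ := Real.rpow_pos_of_pos hε0 κ
    have hδ1 : δ ≤ 1 := Real.rpow_le_one hε0.le hε1.le hκ₀.le
    set a := -1 + δ
    set b := 1 - δ
    have hsub : Set.Icc a b ⊆ Set.Icc (-1 : ℝ) 1 := by
      apply Set.Icc_subset_Icc <;> simp only [a, b] <;> linarith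
    -- derivative of φ ε exists in the classical sense on Icc a b
    have hder : ∀ z ∈ Set.Icc a b, HasDerivAt (φ ε) (deriv (φ ε) z) z := by
      intro z hz
      refine (hdiff ε ⟨hε0, hε1⟩ z (hsub hz)).hasDerivAt ?_
      refine Icc_mem_nhds ?_ ?_
      · have := hz.1; simp only [a] at this; linarith
      · have := hz.2; simp only [b] at this; linarith
    set G : ℝ → ℝ := fun t => C/(M*ε) * (Real.exp (-M*(1-t)/ε) - Real.exp (-M*(1+t)/ε))
      with hGdef
    set g : ℝ → ℝ := fun t => C / ε^2 * (Real.exp (-M*(1+t)/ε) + Real.exp (-M*(1-t)/ε))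
      with hgdef
    have hG : ∀ t : ℝ, HasDerivAt G (g t) t := fun t =>
      aux_G_deriv C M ε hM.ne' hε0.ne' t
    have hbd : ∀ z ∈ Set.Icc a b, |deriv (φ ε) z| ≤ g z := fun z hz =>
      hbound ε ⟨hε0, hε1⟩ z (hsub hz)
    -- monotone functions
    have mono1 : MonotoneOn (fun t => G t - φ ε t) (Set.Icc a b) := by
      apply aux_mono _ (fun t => g t - deriv (φ ε) t)
      · exact fun z hz => (hG z).sub (hder z hz)
      · intro z hz
        have := hbd z hz
        have := abs_le.mp this
        linarith [this.2]
    have mono2 : MonotoneOn (fun t => G t + φ ε t) (Set.Icc a b) := by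
      apply aux_mono _ (fun t => g t + deriv (φ ε) t)
      · exact fun z hz => (hG z).add (hder z hz)
      · intro z hz
        have := abs_le.mp (hbd z hz)
        linarith [this.1]
    have monoG : MonotoneOn G (Set.Icc a b) := by
      apply aux_mono _ g (a) (b) (fun z _ => hG z)
      intro z _
      have := Real.exp_pos (-M*(1+z)/ε)
      have := Real.exp_pos (-M*(1-z)/ε)
      have h1 : (0:ℝ) < C / ε^2 := by positivity
      have : 0 ≤ g z := by
        simp only [hgdef]; positivity
      exact this
    have hab : a ∈ Set.Icc a b := by
      constructor
      · exact le_refl a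
      · simp only [a, b]; linarith
    have hbb : b ∈ Set.Icc a b := by
      constructor
      · simp only [a, b]; linarith
      · exact le_refl b
    -- oscillation bound via monotone functions
    have key : ∀ u ∈ Set.Icc a b, ∀ v ∈ Set.Icc a b, v ≤ u →
        |φ ε u - φ ε v| ≤ G b - G a := by
      intro u hu v hv huv
      have h1 := mono1 hv hu huv
      have h2 := mono2 hv hu huv
      have h3 : G u ≤ G b := monoG hu hbb hu.2
      have h4 : G a ≤ G v := monoG hab hv hv.1
      rw [abs_sub_le_iff]
      constructor <;> simp only at h1 h2 <;> linarith
    have main : |φ ε x - φ ε y| ≤ G b - G a := by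
      rcases le_total y x with h | h
      · exact key x hx y hy h
      · rw [abs_sub_comm]; exact key y hy x hx h
    -- compute G b - G a
    have harg1 : -M*(1-b)/ε = -M*δ/ε := by simp only [b]; ring
    have harg2 : -M*(1+b)/ε = -M*(2-δ)/ε := by simp only [b]; ring
    have harg3 : -M*(1-a)/ε = -M*(2-δ)/ε := by simp only [a]; ring
    have harg4 : -M*(1+a)/ε = -M*δ/ε := by simp only [a]; ring
    have hGval : G b - G a = 2 * (C/(M*ε)) * (Real.exp (-M*δ/ε) - Real.exp (-M*(2-δ)/ε)) := by
      simp only [hGdef, harg1, harg2, harg3, harg4]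
      ring
    have hexp2pos : 0 < Real.exp (-M*(2-δ)/ε) := Real.exp_pos _
    have hcoef : 0 < C/(M*ε) := by positivity
    have hδε : -M*δ/ε = -M * ε ^ (κ - 1) := by
      have h : ε ^ (κ - 1) = δ / ε := by
        rw [hδdef, Real.rpow_sub hε0, Real.rpow_one]
      rw [h]; ring
    have hfinal : G b - G a ≤ 4 * C / (M * ε) * Real.exp (-M * ε ^ (κ - 1)) := by
      rw [hGval, ← hδε]
      have hexppos : 0 < Real.exp (-M*δ/ε) := Real.exp_pos _
      have : 4 * C / (M * ε) = 4 * (C/(M*ε)) := by ring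
      rw [this]
      nlinarith
    exact main.trans hfinal
  · -- the bound tends to 0 as ε → 0⁺
    have h1 : Filter.Tendsto (fun u : ℝ => u ^ (1/(1-κ)) * Real.exp (-M * u))
        Filter.atTop (nhds 0) :=
      tendsto_rpow_mul_exp_neg_mul_atTop_nhds_zero _ M hM
    have h2 : Filter.Tendsto (fun ε : ℝ => ε ^ (κ - 1)) (nhdsWithin 0 (Set.Ioi 0))
        Filter.atTop := by
      have hinv : Filter.Tendsto (fun ε : ℝ => ε⁻¹) (nhdsWithin 0 (Set.Ioi 0))
          Filter.atTop := tendsto_inv_nhdsGT_zero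
      have hpow : Filter.Tendsto (fun u : ℝ => u ^ (1 - κ)) Filter.atTop Filter.atTop :=
        tendsto_rpow_atTop (by linarith)
      have := hpow.comp hinv
      refine this.congr' ?_
      filter_upwards [self_mem_nhdsWithin] with ε (hε : 0 < ε)
      show (ε⁻¹) ^ (1 - κ) = ε ^ (κ - 1)
      rw [← Real.rpow_neg_one ε, ← Real.rpow_mul hε.le]
      congr 1
      ring
    have h3 : Filter.Tendsto
        (fun ε : ℝ => (ε ^ (κ - 1)) ^ (1/(1-κ)) * Real.exp (-M * ε ^ (κ - 1)))
        (nhdsWithin 0 (Set.Ioi 0)) (nhds 0) := h1.comp h2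
    have h4 : Filter.Tendsto
        (fun ε : ℝ => ε⁻¹ * Real.exp (-M * ε ^ (κ - 1)))
        (nhdsWithin 0 (Set.Ioi 0)) (nhds 0) := by
      refine h3.congr' ?_
      filter_upwards [self_mem_nhdsWithin] with ε (hε : 0 < ε)
      have : (ε ^ (κ - 1)) ^ (1/(1-κ)) = ε⁻¹ := by
        rw [← Real.rpow_mul hε.le]
        have hne : 1 - κ ≠ 0 := by linarith
        have : (κ - 1) * (1/(1-κ)) = -1 := by field_simp; ring
        rw [this, Real.rpow_neg_one]
      rw [this]
    have h5 := h4.const_mul (4 * C / M)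
    rw [mul_zero] at h5
    refine h5.congr fun ε => ?_
    have hrw : 4*C/(M*ε) = 4*C/M * ε⁻¹ := by rw [← div_div, div_eq_mul_inv]
    rw [hrw, mul_assoc]
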